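/- In the polynomial ring ℂ[x_1, …, x_n][t] the identity (x_1 − t + n − 1)(x_2 − t + n − 2)⋯(x_n − t) = Σ_{j=0}^{n} (−1)^{n−j} e_j^*(x_1, …, x_n) (t)_{n−j} holds, where e_j^* is the j-th shifted elementary symmetric polynomial and (t)_k = t(t−1)⋯(t−k+1) is the k-th falling factorial polynomial. -/

import Mathlib

noncomputable section

open MvPolynomial

/-- The `k`-th shifted elementary symmetric polynomial
`e_k^*(x_1, …, x_n) = Σ_{1 ≤ i_1 < ⋯ < i_k ≤ n} (x_{i_1} + k − 1)(x_{i_2} + k − 2)⋯(x_{i_k})`,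
with `e_0^* = 1`. -/
def shiftedElemSym (n k : ℕ) : MvPolynomial (Fin n) ℂ :=
  ∑ f ∈ Finset.univ.filter (fun f : Fin k → Fin n => ∀ a b : Fin k, a < b → f a < f b),
    ∏ a : Fin k, (MvPolynomial.X (f a) + MvPolynomial.C ((k : ℂ) - 1 - (a : ℕ)))

/-- The `k`-th falling factorial polynomial `(t)_k = t(t−1)⋯(t−k+1)`. -/
def fallingFactorialPoly (R : Type*) [CommRing R] (k : ℕ) : Polynomial R :=
  ∏ l ∈ Finset.range k, (Polynomial.X - Polynomial.C (l : R))

lemma shiftedElemSym_zero (n : ℕ) : shiftedElemSym n 0 = 1 := by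
  simp [shiftedElemSym]

lemma shiftedElemSym_eq_zero (n k : ℕ) (h : n < k) : shiftedElemSym n k = 0 := by
  apply Finset.sum_eq_zero
  intro f hf
  simp only [Finset.mem_filter] at hf
  exact absurd (Fintype.card_le_of_injective f (fun a b hab => by
    by_contra hne
    rcases lt_or_gt_of_ne hne with h1 | h1
    · exact absurd hab (ne_of_lt (hf.2 a b h1))
    · exact absurd hab.symm (ne_of_lt (hf.2 b a h1)))) (by simpa using not_le.mpr h)

lemma ff_succ (R : Type*) [CommRing R] (m : ℕ) :
    fallingFactorialPoly R (m+1) = fallingFactorialPoly R m * (Polynomial.X - Polynomial.C (m : R)) := by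
  simp [fallingFactorialPoly, Finset.prod_range_succ]

lemma ff_map {R S : Type*} [CommRing R] [CommRing S] (φ : R →+* S) (k : ℕ) :
    (fallingFactorialPoly R k).map φ = fallingFactorialPoly S k := by
  simp [fallingFactorialPoly, Polynomial.map_prod]

open Classical in
lemma e_rec (n k : ℕ) :
    shiftedElemSym (n+1) (k+1) =
      (X 0 + C (k : ℂ)) * rename Fin.succ (shiftedElemSym n k)
        + rename Fin.succ (shiftedElemSym n (k+1)) := by
  simp only [shiftedElemSym, map_sum, map_prod, map_add, rename_X, rename_C, Finset.mul_sum]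
  rw [← Finset.sum_filter_add_sum_filter_not
    (Finset.univ.filter (fun f : Fin (k+1) → Fin (n+1) => ∀ a b, a < b → f a < f b))
    (fun f => f 0 = 0)]
  congr 1
  · -- f 0 = 0 part
    refine Finset.sum_bij'
      (fun f hf => fun a : Fin k => (f a.succ).pred (by
        have h := Finset.mem_filter.mp hf
        have hm := (Finset.mem_filter.mp h.1).2
        exact Fin.ne_of_gt (h.2 ▸ hm 0 a.succ (Fin.succ_pos a))))
      (fun g hg => Fin.cons 0 (fun a => Fin.succ (g a)))
      ?hi ?hj ?li ?ri ?h
    case hi =>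
      intro f hf
      have h := Finset.mem_filter.mp hf
      have hm := (Finset.mem_filter.mp h.1).2
      simp only [Finset.mem_filter, Finset.mem_univ, true_and]
      intro a b hab
      rw [Fin.pred_lt_pred_iff]
      exact hm _ _ (Fin.succ_lt_succ_iff.mpr hab)
    case hj =>
      intro g hg
      have hm := (Finset.mem_filter.mp hg).2
      simp only [Finset.mem_filter, Finset.mem_univ, true_and]
      refine ⟨fun a b hab => ?_, Fin.cons_zero _ _⟩
      refine Fin.cases (fun hb => ?_) (fun a' hb => ?_) a hab <;>
        refine Fin.cases (fun h => ?_) (fun b' h => ?_) b hb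
      · exact absurd h (lt_irrefl _)
      · simp only [Fin.cons_zero, Fin.cons_succ]; exact Fin.succ_pos _
      · exact absurd h (Fin.not_lt_zero _)
      · simp only [Fin.cons_succ]
        exact Fin.succ_lt_succ_iff.mpr (hm _ _ (Fin.succ_lt_succ_iff.mp h))
    case li =>
      intro f hf
      have h := Finset.mem_filter.mp hf
      funext a
      refine Fin.cases ?_ (fun a' => ?_) a
      · simpa using h.2.symm
      · simp
    case ri =>
      intro g hg
      funext a
      simp [Fin.cons_succ, Fin.pred_succ]
    case h =>
      intro f hf
      have h := Finset.mem_filter.mp hf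
      rw [Fin.prod_univ_succ]
      simp only [h.2]
      congr 1
      · congr 1
        simp
      · apply Finset.prod_congr rfl
        intro a _
        rw [Fin.succ_pred]
        congr 1
        simp only [Fin.val_succ]
        push_cast
        ring_nf
  · -- f 0 ≠ 0 part
    refine Finset.sum_bij'
      (fun f hf => fun a : Fin (k+1) => (f a).pred (by
        have h := Finset.mem_filter.mp hf
        have hm := (Finset.mem_filter.mp h.1).2
        rcases eq_or_ne a 0 with rfl | ha
        · exact h.2
        · exact Fin.ne_of_gt (lt_of_le_of_lt (Fin.zero_le _)
            (hm 0 a (Fin.pos_iff_ne_zero.mpr ha)))))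
      (fun g hg => fun a => Fin.succ (g a))
      ?hi2 ?hj2 ?li2 ?ri2 ?h2
    case hi2 =>
      intro f hf
      have hm := (Finset.mem_filter.mp (Finset.mem_filter.mp hf).1).2
      simp only [Finset.mem_filter, Finset.mem_univ, true_and]
      intro a b hab
      rw [Fin.pred_lt_pred_iff]
      exact hm _ _ hab
    case hj2 =>
      intro g hg
      have hm := (Finset.mem_filter.mp hg).2
      simp only [Finset.mem_filter, Finset.mem_univ, true_and]
      exact ⟨fun a b hab => Fin.succ_lt_succ_iff.mpr (hm a b hab), Fin.succ_ne_zero _⟩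
    case li2 =>
      intro f hf
      funext a
      simp
    case ri2 =>
      intro g hg
      funext a
      simp
    case h2 =>
      intro f hf
      apply Finset.prod_congr rfl
      intro a _
      simp

lemma step (n : ℕ) :
    ∑ j ∈ Finset.range (n+2),
        (-1 : Polynomial (MvPolynomial (Fin (n+1)) ℂ)) ^ (n+1-j) *
          Polynomial.C (shiftedElemSym (n+1) j) *
          fallingFactorialPoly (MvPolynomial (Fin (n+1)) ℂ) (n+1-j)
      = (Polynomial.C (MvPolynomial.X 0) - Polynomial.X + Polynomial.C (C (n:ℂ))) *
        ∑ j ∈ Finset.range (n+1),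
          (-1) ^ (n-j) * Polynomial.C (rename Fin.succ (shiftedElemSym n j)) *
            fallingFactorialPoly (MvPolynomial (Fin (n+1)) ℂ) (n-j) := by
  have hz : shiftedElemSym n (n+1) = 0 := shiftedElemSym_eq_zero _ _ (lt_add_one n)
  rw [Finset.sum_range_succ']
  have h1 : ∀ i ∈ Finset.range (n+1),
      (-1 : Polynomial (MvPolynomial (Fin (n+1)) ℂ))^(n+1-(i+1)) *
          Polynomial.C (shiftedElemSym (n+1) (i+1)) *
          fallingFactorialPoly _ (n+1-(i+1))
      = ((-1)^(n-i) * (Polynomial.C (X 0 + C (i:ℂ)) *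
            Polynomial.C (rename Fin.succ (shiftedElemSym n i))) *
          fallingFactorialPoly _ (n-i)
        + (-1)^(n-i) * Polynomial.C (rename Fin.succ (shiftedElemSym n (i+1))) *
          fallingFactorialPoly _ (n-i)) := by
    intro i hi
    have hni : n+1-(i+1) = n-i := by omega
    rw [hni, e_rec, map_add, map_mul]
    ring
  rw [Finset.sum_congr rfl h1, Finset.sum_add_distrib, add_assoc]
  have h2 : (∑ i ∈ Finset.range (n+1),
        (-1 : Polynomial (MvPolynomial (Fin (n+1)) ℂ))^(n-i) *
          Polynomial.C (rename Fin.succ (shiftedElemSym n (i+1))) *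
          fallingFactorialPoly _ (n-i))
      + (-1)^(n+1-0) * Polynomial.C (shiftedElemSym (n+1) 0) * fallingFactorialPoly _ (n+1-0)
      = ∑ j ∈ Finset.range (n+1),
          (-1)^(n+1-j) * Polynomial.C (rename Fin.succ (shiftedElemSym n j)) *
            fallingFactorialPoly _ (n+1-j) := by
    have e0 : shiftedElemSym (n+1) 0 = rename Fin.succ (shiftedElemSym n 0) := by
      rw [shiftedElemSym_zero, shiftedElemSym_zero, map_one]
    have hext : (∑ j ∈ Finset.range (n+2),
          (-1 : Polynomial (MvPolynomial (Fin (n+1)) ℂ))^(n+1-j) *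
            Polynomial.C (rename Fin.succ (shiftedElemSym n j)) *
            fallingFactorialPoly _ (n+1-j))
        = ∑ j ∈ Finset.range (n+1),
            (-1)^(n+1-j) * Polynomial.C (rename Fin.succ (shiftedElemSym n j)) *
              fallingFactorialPoly _ (n+1-j) := by
      rw [Finset.sum_range_succ]
      simp [hz]
    rw [e0, ← hext]
    conv_rhs => rw [Finset.sum_range_succ']
    rw [add_left_inj]
    apply Finset.sum_congr rfl
    intro i _
    simp [Nat.succ_sub_succ]
  rw [h2, ← Finset.sum_add_distrib, Finset.mul_sum]
  apply Finset.sum_congr rfl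
  intro j hj
  have hj' : j ≤ n := Nat.lt_succ_iff.mp (Finset.mem_range.mp hj)
  have h3 : n+1-j = (n-j)+1 := by omega
  rw [h3, ff_succ, pow_succ]
  have hcc : (C (j:ℂ) : MvPolynomial (Fin (n+1)) ℂ) + C (((n-j:ℕ)):ℂ) = C ((n:ℂ)) := by
    rw [← map_add]
    congr 1
    push_cast [Nat.cast_sub hj']
    ring
  have h6 : (Polynomial.C (C (j:ℂ) : MvPolynomial (Fin (n+1)) ℂ)) + Polynomial.C (C (((n-j:ℕ)):ℂ))
      = Polynomial.C (C ((n:ℂ))) := by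
    rw [← map_add, hcc]
  have h5 : Polynomial.C (MvPolynomial.X 0 + C (j:ℂ))
        - (Polynomial.X - Polynomial.C ((n-j : ℕ) : MvPolynomial (Fin (n+1)) ℂ))
      = Polynomial.C (MvPolynomial.X 0) - Polynomial.X + Polynomial.C (C (n:ℂ)) := by
    rw [← map_natCast (C : ℂ →+* MvPolynomial (Fin (n+1)) ℂ) (n-j)]
    simp only [map_add]
    linear_combination h6
  linear_combination ((-1 : Polynomial (MvPolynomial (Fin (n+1)) ℂ))^(n-j) *
    Polynomial.C (rename Fin.succ (shiftedElemSym n j)) * fallingFactorialPoly _ (n-j)) * h5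

/-- In `ℂ[x_1, …, x_n][t]` the identity
`(x_1 − t + n − 1)(x_2 − t + n − 2)⋯(x_n − t) = Σ_{j=0}^{n} (−1)^{n−j} e_j^* (t)_{n−j}`
holds. -/
theorem shifted_product_eq_sum_shiftedElemSym (n : ℕ) :
    ∏ i : Fin n,
      (Polynomial.C (MvPolynomial.X i) - Polynomial.X +
        Polynomial.C (MvPolynomial.C ((n : ℂ) - 1 - (i : ℕ)))) =
    ∑ j ∈ Finset.range (n + 1),
      (-1 : Polynomial (MvPolynomial (Fin n) ℂ)) ^ (n - j) *
        Polynomial.C (shiftedElemSym n j) *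
        fallingFactorialPoly (MvPolynomial (Fin n) ℂ) (n - j) := by
  induction n with
  | zero => simp [shiftedElemSym_zero, fallingFactorialPoly]
  | succ n ih =>
    have hmap := congrArg (Polynomial.map ((rename (Fin.succ : Fin n → Fin (n+1))).toRingHom)) ih
    simp only [Polynomial.map_prod, Polynomial.map_sum, Polynomial.map_mul, Polynomial.map_add,
      Polynomial.map_sub, Polynomial.map_pow, Polynomial.map_neg, Polynomial.map_one,
      Polynomial.map_C, Polynomial.map_X, ff_map, AlgHom.toRingHom_eq_coe, RingHom.coe_coe,
      rename_X, rename_C] at hmap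
    rw [Fin.prod_univ_succ]
    have htail : (∏ i : Fin n,
        (Polynomial.C (MvPolynomial.X (Fin.succ i)) - Polynomial.X +
          Polynomial.C (MvPolynomial.C (((n+1 : ℕ) : ℂ) - 1 - ((Fin.succ i : Fin (n+1)) : ℕ)))))
        = ∏ i : Fin n,
        (Polynomial.C (MvPolynomial.X (Fin.succ i)) - Polynomial.X +
          Polynomial.C (MvPolynomial.C ((n : ℂ) - 1 - (i : ℕ)))) := by
      apply Finset.prod_congr rfl
      intro i _
      congr 2
      simp only [Fin.val_succ]
      push_cast
      ring
    rw [htail, hmap, step]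
    congr 2
    simp
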